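/- Let K be a field with a valuation v : K → ℤₘ₀, with valuation ring 𝒪 = {x ∈ K : v x ≤ 1}. Let d, π, and 2 = 1+1 ∈ K satisfy v d = 1, v 2 = 1, and v π = Multiplicative.ofAdd (−1) (π a uniformizer). Let ψ : K → ℂ be an additive character such that ψ(x) = 1 whenever v x ≤ 1, and such that ψ(a) ≠ 1 for some a ∈ K with v a = Multiplicative.ofAdd (1). In the quaternion algebra ℍ[K, d, π], let Λ := 𝒪·1 + 𝒪·i + 𝒪·j + 𝒪·k (the 𝒪-span of the standard basis), and define the reduced trace of z ∈ ℍ[K, d, π] to be the scalar z + star z = 2·(real part of z). Then the dual lattice of Λ with respect to the pairing (x, y) ↦ ψ(reduced trace of x · star y), namely the set {x ∈ ℍ[K, d, π] : ψ(2 · (x · star y).re) = 1 for all y ∈ Λ}, equals {π⁻¹ · (j · w) : w ∈ Λ}. -/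

import Mathlib

open scoped Quaternion

local notation "ℤₘ₀" => WithZero (Multiplicative ℤ)

/-- Let `K` be a field with valuation `v : K → ℤₘ₀`, `d` a unit (`v d = 1`), `2` a unit
(`v 2 = 1`), `π` a uniformizer, and `ψ` an additive character of `K` of order zero
(trivial on the valuation ring, nontrivial on `π⁻¹·𝒪`). In `ℍ[K, d, π]`, let `Λ` be the
`𝒪`-span of the standard basis `1, i, j, k`. Then the dual lattice of `Λ` with respect to
the pairing `(x, y) ↦ ψ(trd(x · star y)) = ψ(2·(x·star y).re)` equals `π⁻¹ · (j · Λ)`. -/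
theorem dual_lattice_eq_uniformizer_inv_mul
    (K : Type*) [Field K] (v : Valuation K ℤₘ₀) (d π : K)
    (hd : v d = 1) (h2 : v (2 : K) = 1)
    (hπ : v π = (Multiplicative.ofAdd (-1 : ℤ) : Multiplicative ℤ))
    (ψ : AddChar K ℂ)
    (hψ_triv : ∀ x : K, v x ≤ 1 → ψ x = 1)
    (hψ_nontriv : ∃ a : K, v a = (Multiplicative.ofAdd (1 : ℤ) : Multiplicative ℤ) ∧ ψ a ≠ 1)
    (Λ : Set ℍ[K, d, π])
    (hΛ : Λ = {z : ℍ[K, d, π] | v z.re ≤ 1 ∧ v z.imI ≤ 1 ∧ v z.imJ ≤ 1 ∧ v z.imK ≤ 1}) :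
    {x : ℍ[K, d, π] | ∀ y ∈ Λ, ψ (2 * (x * star y).re) = 1}
      = {x : ℍ[K, d, π] | ∃ w ∈ Λ, x = π⁻¹ • ((⟨0, 0, 1, 0⟩ : ℍ[K, d, π]) * w)} := by
  have hπ0 : π ≠ 0 := by
    intro h
    rw [h, v.map_zero] at hπ
    exact (WithZero.coe_ne_zero hπ.symm)
  -- conductor lemma
  have hcond : ∀ c : K, (∀ t : K, v t ≤ 1 → ψ (c * t) = 1) → v c ≤ 1 := by
    intro c hc
    by_contra h
    push_neg at h
    have hc0 : c ≠ 0 := by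
      intro h0
      rw [h0, v.map_zero] at h
      exact absurd h (not_lt.mpr zero_le')
    obtain ⟨a, ha, hne⟩ := hψ_nontriv
    obtain ⟨m, hm⟩ := WithZero.ne_zero_iff_exists.mp (v.ne_zero_iff.mpr hc0)
    have h1m : (1 : Multiplicative ℤ) < m := by
      rw [← hm] at h
      exact_mod_cast h
    have hle : ((Multiplicative.ofAdd (1 : ℤ) : Multiplicative ℤ) : ℤₘ₀) ≤ v c := by
      rw [← hm]
      refine WithZero.coe_le_coe.mpr ?_
      have h0 : (0 : ℤ) < Multiplicative.toAdd m := by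
        simpa using Multiplicative.toAdd_lt.mpr h1m
      rw [← Multiplicative.toAdd_le, toAdd_ofAdd]
      omega
    have hva : v (a / c) ≤ 1 := by
      rw [map_div₀, ha]
      exact (div_le_one₀ (lt_of_lt_of_le zero_lt_one h.le)).mpr hle
    have := hc (a / c) hva
    rw [mul_div_cancel₀ a hc0] at this
    exact hne this
  -- unit stripping
  have hunit : ∀ u c : K, v u = 1 → (v (u * c) ≤ 1 ↔ v c ≤ 1) := by
    intro u c hu
    rw [v.map_mul, hu, one_mul]
  -- the real part of x * star y
  have hre : ∀ x y : ℍ[K, d, π], (x * star y).re =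
      x.re * y.re - d * x.imI * y.imI - π * x.imJ * y.imJ + d * π * x.imK * y.imK := by
    intro x y
    simp only [QuaternionAlgebra.re_mul, QuaternionAlgebra.re_star, QuaternionAlgebra.imI_star,
      QuaternionAlgebra.imJ_star, QuaternionAlgebra.imK_star]
    ring
  have hzero : v (0 : K) ≤ 1 := by simp [v.map_zero]
  have hadd : ∀ a b : K, v a ≤ 1 → v b ≤ 1 → v (a + b) ≤ 1 := fun a b ha hb =>
    le_trans (v.map_add a b) (max_le ha hb)
  have hmul : ∀ a b : K, v a ≤ 1 → v b ≤ 1 → v (a * b) ≤ 1 := fun a b ha hb => by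
    rw [v.map_mul]; exact mul_le_one' ha hb
  ext x
  simp only [Set.mem_setOf_eq]
  constructor
  · intro h
    -- extract coordinatewise conditions
    have key : ∀ c : K, (∀ t : K, v t ≤ 1 → ψ (c * t) = 1) → v c ≤ 1 := hcond
    have h1 : v x.re ≤ 1 := by
      have := hcond (2 * x.re) (fun t ht => by
        have := h ⟨t, 0, 0, 0⟩ (by rw [hΛ]; exact ⟨ht, hzero, hzero, hzero⟩)
        rw [hre] at this
        convert this using 2
        ring)
      rwa [hunit 2 x.re h2] at this
    have h2' : v x.imI ≤ 1 := by
      have := hcond (2 * (d * x.imI)) (fun t ht => by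
        have := h ⟨0, -t, 0, 0⟩ (by
          rw [hΛ]; exact ⟨hzero, by rwa [v.map_neg], hzero, hzero⟩)
        rw [hre] at this
        convert this using 2
        ring)
      rwa [hunit 2 _ h2, hunit d _ hd] at this
    have h3 : v (π * x.imJ) ≤ 1 := by
      have := hcond (2 * (π * x.imJ)) (fun t ht => by
        have := h ⟨0, 0, -t, 0⟩ (by
          rw [hΛ]; exact ⟨hzero, hzero, by rwa [v.map_neg], hzero⟩)
        rw [hre] at this
        convert this using 2
        ring)
      rwa [hunit 2 _ h2] at this
    have h4 : v (π * x.imK) ≤ 1 := by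
      have := hcond (2 * (d * (π * x.imK))) (fun t ht => by
        have := h ⟨0, 0, 0, t⟩ (by rw [hΛ]; exact ⟨hzero, hzero, hzero, ht⟩)
        rw [hre] at this
        convert this using 2
        ring)
      rwa [hunit 2 _ h2, hunit d _ hd] at this
    refine ⟨⟨π * x.imJ, -(π * x.imK), x.re, -x.imI⟩, ?_, ?_⟩
    · rw [hΛ]
      exact ⟨h3, by rwa [v.map_neg], h1, by rwa [v.map_neg]⟩
    · ext <;>
        simp only [QuaternionAlgebra.re_smul, QuaternionAlgebra.imI_smul,
          QuaternionAlgebra.imJ_smul, QuaternionAlgebra.imK_smul,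
          QuaternionAlgebra.re_mul, QuaternionAlgebra.imI_mul, QuaternionAlgebra.imJ_mul,
          QuaternionAlgebra.imK_mul, smul_eq_mul] <;>
        field_simp <;> ring
  · rintro ⟨w, hw, rfl⟩
    rw [hΛ] at hw
    obtain ⟨hw1, hw2, hw3, hw4⟩ := hw
    intro y hy
    rw [hΛ] at hy
    obtain ⟨hy1, hy2, hy3, hy4⟩ := hy
    apply hψ_triv
    rw [hre]
    simp only [QuaternionAlgebra.re_smul, QuaternionAlgebra.imI_smul,
      QuaternionAlgebra.imJ_smul, QuaternionAlgebra.imK_smul,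
      QuaternionAlgebra.re_mul, QuaternionAlgebra.imI_mul, QuaternionAlgebra.imJ_mul,
      QuaternionAlgebra.imK_mul, smul_eq_mul]
    have heq : (2 : K) * ((π⁻¹ * (0 * w.re + d * 0 * w.imI + π * 1 * w.imJ + 0 * π * 1 * w.imK - d * π * 0 * w.imK)) * y.re
        - d * (π⁻¹ * (0 * w.imI + 0 * w.re + 0 * 0 * w.imI - π * 1 * w.imK + π * 0 * w.imJ)) * y.imI
        - π * (π⁻¹ * (0 * w.imJ + d * 0 * w.imK + 1 * w.re + 0 * 1 * w.imI - d * 0 * w.imI)) * y.imJ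
        + d * π * (π⁻¹ * (0 * w.imK + 0 * w.imJ + 0 * 0 * w.imK - 1 * w.imI + 0 * w.re)) * y.imK)
        = 2 * (w.imJ * y.re + d * (w.imK * y.imI) - w.re * y.imJ - d * (w.imI * y.imK)) := by
      field_simp
      ring
    rw [heq]
    apply hmul _ _ h2.le
    have t1 := hmul _ _ hw3 hy1
    have t2 := hmul _ _ hd.le (hmul _ _ hw4 hy2)
    have t3 := hmul _ _ hw1 hy3
    have t4 := hmul _ _ hd.le (hmul _ _ hw2 hy4)
    have : v (w.imJ * y.re + d * (w.imK * y.imI) - w.re * y.imJ - d * (w.imI * y.imK)) ≤ 1 := by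
      rw [sub_eq_add_neg, sub_eq_add_neg]
      refine hadd _ _ (hadd _ _ (hadd _ _ t1 t2) ?_) ?_ <;> rw [v.map_neg] <;> assumption
    exact this
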